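/- Let G₁ and G₂ be vertex-disjoint graphs with distinguished vertices s₁,t₁ ∈ V₁ and s₂,t₂ ∈ V₂, and let G be obtained by identifying s₁ with s₂ and t₁ with t₂ (the parallel operation). Then γ_m(G) ≤ γ_m(G₁) + γ_m(G₂). -/
import Mathlib


/-- `touches G r s` : r and s are adjacent or incident elements of V ∪ E. -/
def touches {V : Type*} (G : SimpleGraph V) : V ⊕ Sym2 V → V ⊕ Sym2 V → Prop
  | Sum.inl v, Sum.inl w => G.Adj v w
  | Sum.inl v, Sum.inr e => v ∈ e
  | Sum.inr e, Sum.inl v => v ∈ e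
  | Sum.inr e, Sum.inr f => ∃ u, u ∈ e ∧ u ∈ f

/-- S ⊆ V ∪ E is a mixed dominating set of G. -/
def IsMixedDomSet {V : Type*} (G : SimpleGraph V) (S : Set (V ⊕ Sym2 V)) : Prop :=
  (∀ e : Sym2 V, Sum.inr e ∈ S → e ∈ G.edgeSet) ∧
  (∀ v : V, Sum.inl v ∉ S → ∃ s ∈ S, touches G (Sum.inl v) s) ∧
  (∀ e ∈ G.edgeSet, Sum.inr e ∉ S → ∃ s ∈ S, touches G (Sum.inr e) s)

/-- The mixed domination number γ_m(G). -/
noncomputable def mixedDomNum (V : Type*) [Fintype V] [DecidableEq V]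
    (G : SimpleGraph V) : ℕ :=
  sInf {n | ∃ S : Finset (V ⊕ Sym2 V), IsMixedDomSet G ↑S ∧ S.card = n}

/-- The parallel operation: identify `s₂` with `s₁` and `t₂` with `t₁`. -/
def parallelOp {V₁ V₂ : Type*} [DecidableEq V₂] (G₁ : SimpleGraph V₁) (G₂ : SimpleGraph V₂)
    (s₁ t₁ : V₁) (s₂ t₂ : V₂) : SimpleGraph (V₁ ⊕ {v : V₂ // v ≠ s₂ ∧ v ≠ t₂}) :=
  SimpleGraph.fromRel (fun x y =>
    match x, y with
    | Sum.inl a, Sum.inl b => G₁.Adj a b ∨ (a = s₁ ∧ b = t₁ ∧ G₂.Adj s₂ t₂)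
    | Sum.inr a, Sum.inr b => G₂.Adj a.1 b.1
    | Sum.inl a, Sum.inr b => (a = s₁ ∧ G₂.Adj s₂ b.1) ∨ (a = t₁ ∧ G₂.Adj t₂ b.1)
    | Sum.inr _, Sum.inl _ => False)

section Aux

/-- lift a vertex map to V ⊕ Sym2 V -/
def liftMap {V W : Type*} (φ : V → W) : V ⊕ Sym2 V → W ⊕ Sym2 W :=
  Sum.map φ (Sym2.map φ)

lemma touches_map {V W : Type*} {G : SimpleGraph V} {H : SimpleGraph W} {φ : V → W}
    (hφ : ∀ a b, G.Adj a b → H.Adj (φ a) (φ b)) :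
    ∀ x y, touches G x y → touches H (liftMap φ x) (liftMap φ y) := by
  rintro (v | e) (w | f) h
  · exact hφ _ _ h
  · exact Sym2.mem_map.2 ⟨v, h, rfl⟩
  · exact Sym2.mem_map.2 ⟨w, h, rfl⟩
  · obtain ⟨u, hu, hu'⟩ := h
    exact ⟨φ u, Sym2.mem_map.2 ⟨u, hu, rfl⟩, Sym2.mem_map.2 ⟨u, hu', rfl⟩⟩

lemma edge_map {V W : Type*} {G : SimpleGraph V} {H : SimpleGraph W} {φ : V → W}
    (hφ : ∀ a b, G.Adj a b → H.Adj (φ a) (φ b)) {e : Sym2 V} (he : e ∈ G.edgeSet) :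
    Sym2.map φ e ∈ H.edgeSet := by
  induction e using Sym2.ind with
  | _ x y => exact hφ x y he

/-- the whole vertex set is a mixed dominating set, so the defining set is nonempty -/
lemma mixedDomNum_spec (V : Type*) [Fintype V] [DecidableEq V] (G : SimpleGraph V) :
    ∃ S : Finset (V ⊕ Sym2 V), IsMixedDomSet G ↑S ∧ S.card = mixedDomNum V G := by
  have hne : {n | ∃ S : Finset (V ⊕ Sym2 V), IsMixedDomSet G ↑S ∧ S.card = n}.Nonempty := by
    refine ⟨_, Finset.univ.image Sum.inl, ⟨?_, ?_, ?_⟩, rfl⟩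
    · intro e he; simp at he
    · intro v hv; simp at hv
    · intro e he _
      refine ⟨Sum.inl (Quot.out e).1, by simp, ?_⟩
      exact Sym2.out_fst_mem e
  obtain ⟨S, hS, hc⟩ := Nat.sInf_mem hne
  exact ⟨S, hS, hc⟩

end Aux

theorem stmt_11 {V₁ V₂ : Type*} [Fintype V₁] [DecidableEq V₁] [Fintype V₂] [DecidableEq V₂]
    (G₁ : SimpleGraph V₁) (G₂ : SimpleGraph V₂) (s₁ t₁ : V₁) (s₂ t₂ : V₂)
    (h₁ : s₁ ≠ t₁) (h₂ : s₂ ≠ t₂) :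
    mixedDomNum (V₁ ⊕ {v : V₂ // v ≠ s₂ ∧ v ≠ t₂}) (parallelOp G₁ G₂ s₁ t₁ s₂ t₂) ≤
      mixedDomNum V₁ G₁ + mixedDomNum V₂ G₂ := by
  classical
  obtain ⟨S₁, hS₁, hc₁⟩ := mixedDomNum_spec V₁ G₁
  obtain ⟨S₂, hS₂, hc₂⟩ := mixedDomNum_spec V₂ G₂
  set W := V₁ ⊕ {v : V₂ // v ≠ s₂ ∧ v ≠ t₂} with hW
  set G := parallelOp G₁ G₂ s₁ t₁ s₂ t₂ with hG
  -- vertex maps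
  set f : V₂ → W := fun v =>
    if h : v = s₂ then Sum.inl s₁ else if h' : v = t₂ then Sum.inl t₁
    else Sum.inr ⟨v, h, h'⟩ with hf
  have hfs : f s₂ = Sum.inl s₁ := by simp [hf]
  have hft : f t₂ = Sum.inl t₁ := by simp [hf, h₂.symm]
  have hfo : ∀ (v : V₂) (h : v ≠ s₂) (h' : v ≠ t₂), f v = Sum.inr ⟨v, h, h'⟩ := by
    intro v h h'; simp [hf, h, h']
  -- adjacency preservation for f
  have hfadj : ∀ a b, G₂.Adj a b → G.Adj (f a) (f b) := by
    intro a b hab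
    have hne : f a ≠ f b := by
      by_cases has : a = s₂
      · subst has
        by_cases hbt : b = t₂
        · subst hbt; rw [hfs, hft]; exact fun h => h₁ (Sum.inl.inj h)
        · rw [hfs, hfo b hab.ne' hbt]; simp
      · by_cases hat : a = t₂
        · subst hat
          by_cases hbs : b = s₂
          · subst hbs; rw [hft, hfs]; exact fun h => h₁ (Sum.inl.inj h).symm
          · rw [hft, hfo b hbs hab.ne']; simp
        · rw [hfo a has hat]
          by_cases hbs : b = s₂
          · subst hbs; rw [hfs]; simp
          · by_cases hbt : b = t₂
            · subst hbt; rw [hft]; simp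
            · rw [hfo b hbs hbt]
              exact fun h => hab.ne (congrArg Subtype.val (Sum.inr.inj h))
    refine ⟨hne, ?_⟩
    by_cases has : a = s₂
    · subst has
      by_cases hbt : b = t₂
      · subst hbt; rw [hfs, hft]; left; exact Or.inr ⟨rfl, rfl, hab⟩
      · rw [hfs, hfo b hab.ne' hbt]; left; exact Or.inl ⟨rfl, hab⟩
    · by_cases hat : a = t₂
      · subst hat
        by_cases hbs : b = s₂
        · subst hbs; rw [hft, hfs]; right; exact Or.inr ⟨rfl, rfl, hab.symm⟩
        · rw [hft, hfo b hbs hab.ne']; left; exact Or.inr ⟨rfl, hab⟩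
      · rw [hfo a has hat]
        by_cases hbs : b = s₂
        · subst hbs; rw [hfs]; right; exact Or.inl ⟨rfl, hab.symm⟩
        · by_cases hbt : b = t₂
          · subst hbt; rw [hft]; right; exact Or.inr ⟨rfl, hab.symm⟩
          · rw [hfo b hbs hbt]; left; exact hab
  have hgadj : ∀ a b, G₁.Adj a b → G.Adj (Sum.inl a) (Sum.inl b) := by
    intro a b hab
    exact ⟨by simp [hab.ne], Or.inl (Or.inl hab)⟩
  -- the combined set
  set S : Finset (W ⊕ Sym2 W) :=
    S₁.image (liftMap Sum.inl) ∪ S₂.image (liftMap f) with hSdef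
  have hcard : S.card ≤ S₁.card + S₂.card :=
    le_trans (Finset.card_union_le _ _)
      (Nat.add_le_add (Finset.card_image_le) (Finset.card_image_le))
  -- edge decomposition of G
  have hdecomp : ∀ e ∈ G.edgeSet,
      (∃ e₁ ∈ G₁.edgeSet, e = Sym2.map Sum.inl e₁) ∨
      (∃ e₂ ∈ G₂.edgeSet, e = Sym2.map f e₂) := by
    intro e he
    induction e using Sym2.ind with
    | _ x y =>
      obtain ⟨hne, hrel⟩ := he
      match x, y, hrel with
      | Sum.inl a, Sum.inl b, Or.inl (Or.inl h) =>
          exact Or.inl ⟨s(a, b), h, by rw [Sym2.map_pair_eq]⟩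
      | Sum.inl a, Sum.inl b, Or.inl (Or.inr ⟨ha, hb, h⟩) =>
          subst ha; subst hb
          exact Or.inr ⟨s(s₂, t₂), h, by rw [Sym2.map_pair_eq, hfs, hft]⟩
      | Sum.inl a, Sum.inl b, Or.inr (Or.inl h) =>
          exact Or.inl ⟨s(b, a), h, by rw [Sym2.map_pair_eq, Sym2.eq_swap]⟩
      | Sum.inl a, Sum.inl b, Or.inr (Or.inr ⟨hb, ha, h⟩) =>
          subst ha; subst hb
          exact Or.inr ⟨s(t₂, s₂), h.symm,
            by rw [Sym2.map_pair_eq, hfs, hft, Sym2.eq_swap]⟩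
      | Sum.inl a, Sum.inr b, Or.inl (Or.inl ⟨ha, h⟩) =>
          subst ha
          exact Or.inr ⟨s(s₂, b.1), h,
            by rw [Sym2.map_pair_eq, hfs, hfo b.1 b.2.1 b.2.2]⟩
      | Sum.inl a, Sum.inr b, Or.inl (Or.inr ⟨ha, h⟩) =>
          subst ha
          exact Or.inr ⟨s(t₂, b.1), h,
            by rw [Sym2.map_pair_eq, hft, hfo b.1 b.2.1 b.2.2]⟩
      | Sum.inr a, Sum.inl b, Or.inr (Or.inl ⟨hb, h⟩) =>
          subst hb
          exact Or.inr ⟨s(a.1, s₂), h.symm,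
            by rw [Sym2.map_pair_eq, hfs, hfo a.1 a.2.1 a.2.2]⟩
      | Sum.inr a, Sum.inl b, Or.inr (Or.inr ⟨hb, h⟩) =>
          subst hb
          exact Or.inr ⟨s(a.1, t₂), h.symm,
            by rw [Sym2.map_pair_eq, hft, hfo a.1 a.2.1 a.2.2]⟩
      | Sum.inr a, Sum.inr b, Or.inl h =>
          exact Or.inr ⟨s(a.1, b.1), h,
            by rw [Sym2.map_pair_eq, hfo a.1 a.2.1 a.2.2, hfo b.1 b.2.1 b.2.2]⟩
      | Sum.inr a, Sum.inr b, Or.inr h =>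
          exact Or.inr ⟨s(b.1, a.1), h,
            by rw [Sym2.map_pair_eq, hfo a.1 a.2.1 a.2.2, hfo b.1 b.2.1 b.2.2,
              Sym2.eq_swap]⟩
  -- membership helpers
  have hmem1 : ∀ x ∈ S₁, liftMap (Sum.inl : V₁ → W) x ∈ S := fun x hx =>
    Finset.mem_union_left _ (Finset.mem_image_of_mem _ hx)
  have hmem2 : ∀ x ∈ S₂, liftMap f x ∈ S := fun x hx =>
    Finset.mem_union_right _ (Finset.mem_image_of_mem _ hx)
  -- S is a mixed dominating set
  have hdom : IsMixedDomSet G ↑S := by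
    refine ⟨?_, ?_, ?_⟩
    · -- edges in S are edges of G
      intro e he
      simp only [hSdef, Finset.coe_union, Set.mem_union, Finset.coe_image,
        Set.mem_image, Finset.mem_coe] at he
      rcases he with ⟨x, hx, hxe⟩ | ⟨x, hx, hxe⟩
      · rcases x with v | e₁
        · exact absurd hxe (by simp [liftMap])
        · have : e = Sym2.map Sum.inl e₁ := by
            simpa [liftMap] using hxe.symm
          rw [this]; exact edge_map hgadj (hS₁.1 e₁ hx)
      · rcases x with v | e₂
        · exact absurd hxe (by simp [liftMap])
        · have : e = Sym2.map f e₂ := by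
            simpa [liftMap] using hxe.symm
          rw [this]; exact edge_map hfadj (hS₂.1 e₂ hx)
    · -- vertex domination
      rintro (a | b) hv
      · have ha1 : Sum.inl a ∉ (S₁ : Set (V₁ ⊕ Sym2 V₁)) := by
          intro h
          exact hv (by simpa [liftMap] using hmem1 _ h)
        obtain ⟨s, hs, hts⟩ := hS₁.2.1 a ha1
        exact ⟨liftMap Sum.inl s, hmem1 s hs, touches_map hgadj _ _ hts⟩
      · have hb1 : Sum.inl b.1 ∉ (S₂ : Set (V₂ ⊕ Sym2 V₂)) := by
          intro h
          have := hmem2 _ h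
          rw [show liftMap f (Sum.inl b.1) = Sum.inl (Sum.inr b) by
            simp [liftMap, hfo b.1 b.2.1 b.2.2]] at this
          exact hv this
        obtain ⟨s, hs, hts⟩ := hS₂.2.1 b.1 hb1
        refine ⟨liftMap f s, hmem2 s hs, ?_⟩
        have := touches_map hfadj _ _ hts
        rwa [show liftMap f (Sum.inl b.1) = Sum.inl (Sum.inr b) by
          simp [liftMap, hfo b.1 b.2.1 b.2.2]] at this
    · -- edge domination
      intro e he hne
      rcases hdecomp e he with ⟨e₁, he₁, rfl⟩ | ⟨e₂, he₂, rfl⟩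
      · have : Sum.inr e₁ ∉ (S₁ : Set (V₁ ⊕ Sym2 V₁)) := by
          intro h
          exact hne (by simpa [liftMap] using hmem1 _ h)
        obtain ⟨s, hs, hts⟩ := hS₁.2.2 e₁ he₁ this
        refine ⟨liftMap Sum.inl s, hmem1 s hs, ?_⟩
        have := touches_map hgadj _ _ hts
        simpa [liftMap] using this
      · have : Sum.inr e₂ ∉ (S₂ : Set (V₂ ⊕ Sym2 V₂)) := by
          intro h
          exact hne (by simpa [liftMap] using hmem2 _ h)
        obtain ⟨s, hs, hts⟩ := hS₂.2.2 e₂ he₂ this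
        refine ⟨liftMap f s, hmem2 s hs, ?_⟩
        have := touches_map hfadj _ _ hts
        simpa [liftMap] using this
  calc mixedDomNum W G ≤ S.card := Nat.sInf_le ⟨S, hdom, rfl⟩
    _ ≤ S₁.card + S₂.card := hcard
    _ = mixedDomNum V₁ G₁ + mixedDomNum V₂ G₂ := by rw [hc₁, hc₂]
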